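/- For all nonnegative integers a ≥ b, the Stirling-Carlitz number of the second kind satisfies S2_C(r^a, r^b) = (D_a/D_b) · 1 / D_{a−b}^{r^b}. -/

import Mathlib

open scoped Classical
open PowerSeries Finset

noncomputable section

variable (F : Type) [Field F] [Fintype F]

/-- The rational function field `K = 𝔽_r(T)`. -/
abbrev K : Type := RatFunc F

/-- `r`, the cardinality of the finite field of constants. -/
def rr : ℕ := Fintype.card F

/-- The variable `T` of the rational function field. -/
def Tv : K F := RatFunc.X

/-- `[i] = T^{r^i} - T`. -/
def br (i : ℕ) : K F := Tv F ^ (rr F) ^ i - Tv F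

/-- `D_0 = 1`, `D_i = [i] · D_{i-1}^r`. -/
def D : ℕ → K F
  | 0 => 1
  | i + 1 => br F (i + 1) * D i ^ rr F

/-- `L_0 = 1`, `L_i = [i] · L_{i-1}`. -/
def L : ℕ → K F
  | 0 => 1
  | i + 1 => br F (i + 1) * L i

/-- The Carlitz factorial `Π(n) = ∏_j D_j^{c_j}`, where `c_j = n / r^j % r` are the
base-`r` digits of `n` (all digits with index `> n` vanish since `r ≥ 2`). -/
def Cf (n : ℕ) : K F := ∏ j ∈ Finset.range (n + 1), D F j ^ (n / (rr F) ^ j % rr F)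

/-- The Carlitz logarithm `log_C(z) = Σ_{i ≥ 0} (-1)^i z^{r^i} / L_i`: the coefficient of
`z^m` is `(-1)^i / L_i` if `m = r^i` and `0` otherwise (note `i ≤ r^i = m` since `r ≥ 2`). -/
def logC : PowerSeries (K F) :=
  PowerSeries.mk fun m =>
    ∑ i ∈ Finset.range (m + 1), if m = (rr F) ^ i then (-1 : K F) ^ i / L F i else 0

/-- The Carlitz exponential `e_C(z) = Σ_{i ≥ 0} z^{r^i} / D_i`. -/
def eC : PowerSeries (K F) :=
  PowerSeries.mk fun m =>
    ∑ i ∈ Finset.range (m + 1), if m = (rr F) ^ i then 1 / D F i else 0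

/-- The power series `log_C(z)/z`. -/
def logCdivZ : PowerSeries (K F) :=
  PowerSeries.mk fun n => PowerSeries.coeff (n + 1) (logC F)

/-- The power series `e_C(z)/z`. -/
def eCdivZ : PowerSeries (K F) :=
  PowerSeries.mk fun n => PowerSeries.coeff (n + 1) (eC F)

lemma two_le_rr : 2 ≤ rr F := Fintype.one_lt_card

lemma br_ne_zero (i : ℕ) (hi : 1 ≤ i) : br F i ≠ 0 := by
  have h2 : 2 ≤ (rr F) ^ i := by
    calc 2 ≤ rr F := two_le_rr F
    _ ≤ (rr F) ^ i := Nat.le_self_pow (by omega) _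
  rw [br, sub_ne_zero]
  intro h
  have hinj : Function.Injective (algebraMap (Polynomial F) (RatFunc F)) :=
    IsFractionRing.injective _ _
  have hX : (Tv F) = algebraMap (Polynomial F) (RatFunc F) Polynomial.X := by
    rw [Tv, RatFunc.algebraMap_X]
  rw [hX, ← map_pow] at h
  have := hinj h
  have hdeg := congrArg Polynomial.natDegree this
  rw [Polynomial.natDegree_X_pow, Polynomial.natDegree_X] at hdeg
  omega

lemma D_ne_zero (j : ℕ) : D F j ≠ 0 := by
  induction j with
  | zero => simp [D]
  | succ j ih =>
    rw [D]
    exact mul_ne_zero (br_ne_zero F (j + 1) (by omega)) (pow_ne_zero _ ih)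

lemma coeff_eC (j : ℕ) : PowerSeries.coeff ((rr F) ^ j) (eC F) = 1 / D F j := by
  have hr : 2 ≤ rr F := two_le_rr F
  rw [eC, PowerSeries.coeff_mk]
  rw [Finset.sum_eq_single_of_mem j]
  · simp
  · rw [Finset.mem_range]
    exact Nat.lt_succ_of_le (Nat.le_of_lt (Nat.lt_pow_self (n := j) (by omega)))
  · intro i _ hij
    rw [if_neg]
    intro h
    exact hij (Nat.pow_right_injective hr h.symm)

lemma Cf_pow (j : ℕ) : Cf F ((rr F) ^ j) = D F j := by
  have hr : 2 ≤ rr F := two_le_rr F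
  rw [Cf, Finset.prod_eq_single_of_mem j]
  · rw [Nat.div_self (Nat.pow_pos (n := j) (by omega)), Nat.one_mod_eq_one.mpr (by omega), pow_one]
  · rw [Finset.mem_range]
    exact Nat.lt_succ_of_le (Nat.le_of_lt (Nat.lt_pow_self (n := j) (by omega)))
  · intro i _ hij
    rcases Nat.lt_or_ge i j with h | h
    · have : (rr F) ^ j / (rr F) ^ i = (rr F) ^ (j - i) := Nat.pow_div (le_of_lt h) (by omega)
      rw [this]
      have h0 : (rr F) ^ (j - i) % rr F = 0 :=
        Nat.mod_eq_zero_of_dvd (dvd_pow_self _ (by omega))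
      rw [h0, pow_zero]
    · have hij' : j < i := by omega
      have : (rr F) ^ j / (rr F) ^ i = 0 :=
        Nat.div_eq_of_lt (Nat.pow_lt_pow_right (by omega) hij')
      rw [this, Nat.zero_mod, pow_zero]

lemma coeff_pow_char {R : Type*} [CommRing R] (p : ℕ) [hp : Fact p.Prime] [CharP R p]
    (f : PowerSeries R) (m : ℕ) :
    PowerSeries.coeff (p * m) (f ^ p) = (PowerSeries.coeff m f) ^ p := by
  haveI : ExpChar R p := ExpChar.prime hp.out
  have hpos : 0 < p := hp.out.pos
  have hlt : p * m < p * m + 1 := Nat.lt_succ_self _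
  have hmlt : m < p * m + 1 := by nlinarith [hp.out.two_le]
  set P : Polynomial R := trunc (p * m + 1) f with hP
  have h1 : PowerSeries.coeff (p * m) (f ^ p) =
      PowerSeries.coeff (p * m) ((P : PowerSeries R) ^ p) := by
    rw [← coeff_coe_trunc_of_lt hlt, ← trunc_trunc_pow, coeff_coe_trunc_of_lt hlt]
  rw [h1, ← Polynomial.coe_pow, Polynomial.coeff_coe,
    ← Polynomial.map_frobenius_expand p P, Polynomial.coeff_map,
    Polynomial.coeff_expand hpos, if_pos (dvd_mul_right p m),
    Nat.mul_div_cancel_left m hpos]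
  rw [frobenius_def]
  congr 1
  rw [hP, ← Polynomial.coeff_coe, coeff_coe_trunc_of_lt hmlt]

lemma coeff_pow_char_pow {R : Type*} [CommRing R] (p : ℕ) [hp : Fact p.Prime] [CharP R p]
    (f : PowerSeries R) (k m : ℕ) :
    PowerSeries.coeff (p ^ k * m) (f ^ p ^ k) = (PowerSeries.coeff m f) ^ p ^ k := by
  induction k with
  | zero => simp
  | succ k ih =>
    have h1 : p ^ (k + 1) * m = p * (p ^ k * m) := by ring
    have h2 : f ^ p ^ (k + 1) = (f ^ p ^ k) ^ p := by rw [← pow_mul, pow_succ]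
    rw [h1, h2, coeff_pow_char, ih, ← pow_mul, ← pow_succ]

/-- For `a ≥ b`, `S2_C(r^a, r^b) = (D_a / D_b) · 1 / D_{a-b}^{r^b}`. -/
theorem stirlingCarlitzSecond_pow_pow
    (S2C : ℕ → ℕ → K F)
    (hS2C : ∀ n k : ℕ,
      PowerSeries.coeff n (eC F ^ k) / Cf F k = S2C n k / Cf F n)
    (a b : ℕ) (hab : b ≤ a) :
    S2C ((rr F) ^ a) ((rr F) ^ b) =
      D F a / D F b * (1 / D F (a - b) ^ (rr F) ^ b) := by
  haveI : CharP F (ringChar F) := ringChar.charP F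
  have hp : (ringChar F).Prime := CharP.char_is_prime F _
  haveI : Fact (ringChar F).Prime := ⟨hp⟩
  haveI : CharP (K F) (ringChar F) := charP_of_injective_algebraMap' F (ringChar F)
  obtain ⟨n, -, hn⟩ := FiniteField.card F (ringChar F)
  have h1 : rr F ^ b = (ringChar F) ^ ((n : ℕ) * b) := by rw [rr, hn, ← pow_mul]
  have h2 : rr F ^ a = rr F ^ b * rr F ^ (a - b) := by rw [← pow_add]; congr 1; omega
  have key : PowerSeries.coeff (rr F ^ a) (eC F ^ rr F ^ b)
      = (1 / D F (a - b)) ^ rr F ^ b := by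
    rw [h2, h1, coeff_pow_char_pow, ← h1, coeff_eC]
  have h := hS2C (rr F ^ a) (rr F ^ b)
  rw [key, Cf_pow, Cf_pow] at h
  have hDa := D_ne_zero F a
  have hDb := D_ne_zero F b
  have hDab := D_ne_zero F (a - b)
  field_simp at h ⊢
  rw [← h, one_div, inv_pow]
  field_simp
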